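/- arXiv:2208.09794 — 6 statements merged into one kernel-verified Lean document; each statement's English description precedes it below -/
import Mathlib

section
/- If λ ∈ 𝒫_p and λ₁ ≥ λ_i for all i ∈ {1,…,n} (λ₁ is the largest entry), then λ₁·F^{11}(λ) ≥ (binom(n,p)/n)·F(λ). (This is item (1) of Lemma 2.2 in the equivalent form without fractional powers: with F̃ = F^{1/binom(n,p)}, it says F̃^{11}(λ)·λ₁ ≥ F̃(λ)/n.) -/
open Finset

/-- `F(λ) = ∏_{|I|=p} Σ_{i∈I} λ_i`, the product over all `p`-element subsets of `{1,…,n}`. -/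
noncomputable def Fval (n p : ℕ) (lam : Fin n → ℝ) : ℝ :=
  ∏ I ∈ Finset.powersetCard p (Finset.univ : Finset (Fin n)), ∑ i ∈ I, lam i

/-- `F^{kk}(λ) = ∂F/∂λ_k = Σ_{|I|=p, k∈I} ∏_{|J|=p, J≠I} Σ_{i∈J} λ_i`. -/
noncomputable def Fkk (n p : ℕ) (k : Fin n) (lam : Fin n → ℝ) : ℝ :=
  ∑ I ∈ (Finset.powersetCard p (Finset.univ : Finset (Fin n))).filter (fun I => k ∈ I),
    ∏ J ∈ (Finset.powersetCard p (Finset.univ : Finset (Fin n))).erase I, ∑ i ∈ J, lam i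

/-- The Gårding cone `𝒫_p`: all sums of `p` of the entries are positive. -/
def Pcone (n p : ℕ) (lam : Fin n → ℝ) : Prop :=
  ∀ I ∈ Finset.powersetCard p (Finset.univ : Finset (Fin n)), 0 < ∑ i ∈ I, lam i

/-- Lemma 2.2 (1): if `λ₁` is the largest entry, then `λ₁·F^{11}(λ) ≥ (C(n,p)/n)·F(λ)`. -/
theorem lemma22_item1 (n p : ℕ) (hn : 0 < n) (hp1 : 1 ≤ p) (hpn : p ≤ n)
    (lam : Fin n → ℝ) (hP : Pcone n p lam)
    (hmax : ∀ i, lam i ≤ lam ⟨0, hn⟩) :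
    ((n.choose p : ℝ) / n) * Fval n p lam ≤ lam ⟨0, hn⟩ * Fkk n p ⟨0, hn⟩ lam := by
  set k : Fin n := ⟨0, hn⟩
  set A : Finset (Finset (Fin n)) := Finset.powersetCard p (Finset.univ : Finset (Fin n)) with hA
  set T := A.filter (fun I => k ∈ I) with hT
  -- each I in A has card p
  have hcard : ∀ I ∈ A, I.card = p := by
    intro I hI; exact (Finset.mem_powersetCard.mp hI).2
  -- bound: S_I ≤ p * λ₁
  have hsum_le : ∀ I ∈ A, (∑ i ∈ I, lam i) ≤ p * lam k := by
    intro I hI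
    calc (∑ i ∈ I, lam i) ≤ ∑ _i ∈ I, lam k := Finset.sum_le_sum (fun i _ => hmax i)
    _ = p * lam k := by rw [Finset.sum_const, hcard I hI, nsmul_eq_mul]
  -- per-term inequality
  have key : ∀ I ∈ T, Fval n p lam ≤ (p : ℝ) * (lam k * ∏ J ∈ A.erase I, ∑ i ∈ J, lam i) := by
    intro I hI
    have hIA : I ∈ A := (Finset.mem_filter.mp hI).1
    have hprodpos : 0 < ∏ J ∈ A.erase I, ∑ i ∈ J, lam i :=
      Finset.prod_pos fun J hJ => hP J (Finset.mem_of_mem_erase hJ)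
    have hF : Fval n p lam = (∑ i ∈ I, lam i) * ∏ J ∈ A.erase I, ∑ i ∈ J, lam i :=
      (Finset.mul_prod_erase A _ hIA).symm
    rw [hF, ← mul_assoc]
    exact mul_le_mul_of_nonneg_right (hsum_le I hIA) hprodpos.le
  -- sum it
  have hsum : (T.card : ℝ) * Fval n p lam ≤ (p : ℝ) * (lam k * Fkk n p k lam) := by
    have := Finset.sum_le_sum key
    simpa [Finset.sum_const, nsmul_eq_mul, Fkk, ← hT, Finset.mul_sum] using this
  -- count T
  have hTcard : T.card = (n - 1).choose (p - 1) := by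
    have e : (((Finset.univ : Finset (Fin n)).erase k).powersetCard (p-1)).card = (n-1).choose (p-1) := by
      rw [Finset.card_powersetCard, Finset.card_erase_of_mem (Finset.mem_univ k), Finset.card_univ,
        Fintype.card_fin]
    rw [hT, hA, ← e]
    apply Finset.card_nbij' (fun I => I.erase k) (fun s => insert k s)
    · intro I hI
      simp only [Finset.mem_coe, Finset.mem_filter, Finset.mem_powersetCard] at hI
      simp only [Finset.mem_coe, Finset.mem_powersetCard]
      refine ⟨fun x hx => Finset.mem_erase.mpr ⟨(Finset.mem_erase.mp hx).1, Finset.mem_univ x⟩, ?_⟩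
      rw [Finset.card_erase_of_mem hI.2, hI.1.2]
    · intro s hs
      simp only [Finset.mem_coe, Finset.mem_powersetCard] at hs
      have hks : k ∉ s := fun h => (Finset.mem_erase.mp (hs.1 h)).1 rfl
      simp only [Finset.mem_coe, Finset.mem_filter, Finset.mem_powersetCard]
      refine ⟨⟨fun x _ => Finset.mem_univ x, ?_⟩, Finset.mem_insert_self k s⟩
      rw [Finset.card_insert_of_notMem hks, hs.2]
      omega
    · intro I hI
      simp only [Finset.mem_coe, Finset.mem_filter] at hI
      exact Finset.insert_erase hI.2
    · intro s hs
      simp only [Finset.mem_coe, Finset.mem_powersetCard] at hs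
      have hks : k ∉ s := fun h => (Finset.mem_erase.mp (hs.1 h)).1 rfl
      exact Finset.erase_insert hks
  -- arithmetic: n * (n-1).choose (p-1) = n.choose p * p
  have hchoose : n * (n - 1).choose (p - 1) = n.choose p * p := by
    have := Nat.add_one_mul_choose_eq (n - 1) (p - 1)
    have h1 : n - 1 + 1 = n := by omega
    have h2 : p - 1 + 1 = p := by omega
    rw [h1, h2] at this
    exact this
  -- finish
  rw [hTcard] at hsum
  have hnpos : (0 : ℝ) < n := by positivity
  have hppos : (0 : ℝ) < p := by exact_mod_cast hp1
  rw [div_mul_eq_mul_div, div_le_iff₀ hnpos]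
  have hchooseR : (n : ℝ) * ((n - 1).choose (p - 1) : ℝ) = (n.choose p : ℝ) * p := by
    exact_mod_cast congrArg (Nat.cast : ℕ → ℝ) hchoose
  have h2 := mul_le_mul_of_nonneg_left hsum hnpos.le
  have h3 : ((n.choose p : ℝ) * Fval n p lam) * p ≤ (lam k * Fkk n p k lam * n) * p := by
    calc ((n.choose p : ℝ) * Fval n p lam) * p
        = ((n : ℝ) * ((n - 1).choose (p - 1) : ℝ)) * Fval n p lam := by rw [hchooseR]; ring
      _ = (n : ℝ) * (((n - 1).choose (p - 1) : ℝ) * Fval n p lam) := by ring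
      _ ≤ (n : ℝ) * ((p : ℝ) * (lam k * Fkk n p k lam)) := h2
      _ = (lam k * Fkk n p k lam * n) * p := by ring
  exact le_of_mul_le_mul_right h3 hppos
end

section
/- If λ ∈ 𝒫_p, then Σ_{k=1}^n F^{kk}(λ) ≥ p·N·F(λ)^{(N−1)/N}, where N = binom(n,p) and the power is the real power of the positive number F(λ). (This is item (2) of Lemma 2.2: with F̃ = F^{1/N}, it says Σ_k F̃^{kk}(λ) ≥ p.) -/
open Finset

/-- Lemma 2.2 (2): `Σ_k F^{kk}(λ) ≥ p·N·F(λ)^((N−1)/N)` with `N = C(n,p)`;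
equivalently, with `F̃ = F^{1/N}`, `Σ_k F̃^{kk}(λ) ≥ p`. -/
theorem lemma22_item2 (n p : ℕ) (hn : 1 ≤ n) (hp1 : 1 ≤ p) (hpn : p ≤ n)
    (lam : Fin n → ℝ) (hP : Pcone n p lam) :
    (p : ℝ) * (n.choose p : ℝ) *
        (Fval n p lam) ^ (((n.choose p : ℝ) - 1) / (n.choose p : ℝ)) ≤
      ∑ k : Fin n, Fkk n p k lam := by
  set S := Finset.powersetCard p (Finset.univ : Finset (Fin n)) with hS
  set N := n.choose p with hN
  have hcard : S.card = N := by simp [hS, hN]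
  have hNpos : 0 < N := Nat.choose_pos hpn
  have hF : 0 < Fval n p lam := Finset.prod_pos hP
  set a : Finset (Fin n) → ℝ := fun I => ∏ J ∈ S.erase I, ∑ i ∈ J, lam i with ha
  have hapos : ∀ I ∈ S, 0 < a I := fun I hI =>
    Finset.prod_pos (fun J hJ => hP J (Finset.mem_of_mem_erase hJ))
  -- Step 1: Σ_k Fkk = p * Σ_{I∈S} a I
  have hsum : ∑ k : Fin n, Fkk n p k lam = (p : ℝ) * ∑ I ∈ S, a I := by
    have : ∀ k : Fin n, Fkk n p k lam = ∑ I ∈ S, if k ∈ I then a I else 0 := by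
      intro k
      rw [Fkk, ← Finset.sum_filter]
    simp only [this]
    rw [Finset.sum_comm, Finset.mul_sum]
    refine Finset.sum_congr rfl fun I hI => ?_
    rw [Finset.sum_ite_mem, Finset.univ_inter, Finset.sum_const]
    have : I.card = p := (Finset.mem_powersetCard.mp hI).2
    rw [this, nsmul_eq_mul]
  -- Step 2: a I = Fval / S_I, and ∏_{I∈S} a I = Fval ^ (N-1)
  have haF : ∀ I ∈ S, a I * (∑ i ∈ I, lam i) = Fval n p lam := fun I hI =>
    Finset.prod_erase_mul S _ hI
  have hprod : ∏ I ∈ S, a I = Fval n p lam ^ (N - 1) := by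
    have h1 : (∏ I ∈ S, a I) * ∏ I ∈ S, (∑ i ∈ I, lam i) = Fval n p lam ^ N := by
      rw [← Finset.prod_mul_distrib, ← hcard, ← Finset.prod_const]
      exact Finset.prod_congr rfl haF
    have h2 : (∏ I ∈ S, (∑ i ∈ I, lam i)) = Fval n p lam := rfl
    rw [h2] at h1
    refine mul_right_cancel₀ hF.ne' ?_
    rw [h1, ← pow_succ, Nat.sub_add_cancel hNpos]
  -- Step 3: AM-GM
  have hAMGM := Real.geom_mean_le_arith_mean_weighted S (fun _ => (N : ℝ)⁻¹) a
    (fun i _ => by positivity)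
    (by rw [Finset.sum_const, hcard, nsmul_eq_mul, mul_inv_cancel₀ (by positivity)])
    (fun I hI => (hapos I hI).le)
  have hlhs : ∏ I ∈ S, a I ^ ((N : ℝ)⁻¹) =
      Fval n p lam ^ (((N : ℝ) - 1) / (N : ℝ)) := by
    rw [Real.finset_prod_rpow S a (fun I hI => (hapos I hI).le), hprod,
      ← Real.rpow_natCast (Fval n p lam) (N - 1), ← Real.rpow_mul hF.le]
    congr 1
    rw [Nat.cast_sub hNpos]
    push_cast
    ring
  have hrhs : ∑ I ∈ S, (N : ℝ)⁻¹ * a I = (N : ℝ)⁻¹ * ∑ I ∈ S, a I := by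
    rw [Finset.mul_sum]
  rw [hlhs, hrhs] at hAMGM
  rw [hsum]
  have hN' : (0:ℝ) < N := by positivity
  have hcancel : (N : ℝ) * ((N : ℝ)⁻¹ * ∑ I ∈ S, a I) = ∑ I ∈ S, a I := by
    rw [← mul_assoc, mul_inv_cancel₀ hN'.ne', one_mul]
  calc (p : ℝ) * (N : ℝ) * Fval n p lam ^ (((N:ℝ) - 1) / (N:ℝ))
      = (p : ℝ) * ((N : ℝ) * Fval n p lam ^ (((N:ℝ) - 1) / (N:ℝ))) := by ring
    _ ≤ (p : ℝ) * ((N : ℝ) * ((N : ℝ)⁻¹ * ∑ I ∈ S, a I)) := by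
        refine mul_le_mul_of_nonneg_left ?_ (by positivity)
        exact mul_le_mul_of_nonneg_left hAMGM hN'.le
    _ = (p : ℝ) * ∑ I ∈ S, a I := by rw [hcancel]
end

section
/- There exists a constant θ > 0 depending only on n and p with the following property: for every λ ∈ 𝒫_p with λ₁ ≥ λ₂ ≥ ⋯ ≥ λₙ and every index j with j ≥ n − p + 1 (i.e., λ_j is among the p smallest entries), one has F^{jj}(λ) ≥ θ · Σ_{i=1}^n F^{ii}(λ). (This is item (4) of Lemma 2.2.) -/
open Finset

/-- Lemma 2.2 (4): there is `θ = θ(n,p) > 0` such that for every `λ ∈ 𝒫_p`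
ordered decreasingly and every index `j` among the `p` smallest entries
(`j ≥ n − p + 1` in 1-based indexing, i.e. `n − p ≤ j` in 0-based indexing),
one has `F^{jj}(λ) ≥ θ · Σ_i F^{ii}(λ)`. -/
theorem lemma22_item4 (n p : ℕ) (hn : 1 ≤ n) (hp1 : 1 ≤ p) (hpn : p ≤ n) :
    ∃ θ : ℝ, 0 < θ ∧
      ∀ lam : Fin n → ℝ, Pcone n p lam →
        (∀ i j : Fin n, i ≤ j → lam j ≤ lam i) →
        ∀ j : Fin n, n - p ≤ (j : ℕ) →
          θ * ∑ i : Fin n, Fkk n p i lam ≤ Fkk n p j lam := by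
  classical
  set pc : Finset (Finset (Fin n)) := Finset.powersetCard p (Finset.univ : Finset (Fin n))
    with hpc
  have hN : 0 < pc.card := by
    rw [hpc, Finset.card_powersetCard, Finset.card_univ, Fintype.card_fin]
    exact Nat.choose_pos hpn
  have hp0 : (0:ℝ) < (p : ℝ) * pc.card := by positivity
  refine ⟨1 / ((p : ℝ) * pc.card), by positivity, ?_⟩
  intro lam hcone hmono j hj
  set t : Finset (Fin n) → ℝ := fun I => ∏ J ∈ pc.erase I, ∑ i ∈ J, lam i with ht
  have hSpos : ∀ I ∈ pc, 0 < ∑ i ∈ I, lam i := hcone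
  have htpos : ∀ I, 0 < t I := fun I =>
    Finset.prod_pos fun J hJ => hSpos J (Finset.mem_of_mem_erase hJ)
  -- key: every term is ≤ Fkk j
  have hFkk : Fkk n p j lam = ∑ I ∈ pc.filter (fun I => j ∈ I), t I := rfl
  have hle : ∀ I' ∈ pc, j ∈ I' → t I' ≤ Fkk n p j lam := by
    intro I' hI' hjI'
    rw [hFkk]
    exact Finset.single_le_sum (fun K _ => (htpos K).le)
      (Finset.mem_filter.2 ⟨hI', hjI'⟩)
  have key : ∀ I ∈ pc, t I ≤ Fkk n p j lam := by
    intro I hI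
    by_cases hjI : j ∈ I
    · exact hle I hI hjI
    · -- find i ∈ I with i ≤ j
      have hcard : I.card = p := (Finset.mem_powersetCard.1 hI).2
      have hex : ∃ i ∈ I, i ≤ j := by
        by_contra hcon
        push_neg at hcon
        have hsub : I ⊆ Finset.Ioi j := fun i hi => Finset.mem_Ioi.2 (hcon i hi)
        have := Finset.card_le_card hsub
        rw [hcard, Fin.card_Ioi] at this
        omega
      obtain ⟨i, hiI, hij⟩ := hex
      set I' : Finset (Fin n) := insert j (I.erase i) with hI'def
      have hji : j ∉ I.erase i := fun h => hjI (Finset.mem_of_mem_erase h)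
      have hI'card : I'.card = p := by
        rw [hI'def, Finset.card_insert_of_notMem hji, Finset.card_erase_of_mem hiI, hcard]
        omega
      have hI'mem : I' ∈ pc := Finset.mem_powersetCard.2 ⟨Finset.subset_univ _, hI'card⟩
      have hjI' : j ∈ I' := Finset.mem_insert_self _ _
      -- sums
      have hSI : ∑ k ∈ I, lam k = lam i + ∑ k ∈ I.erase i, lam k :=
        (Finset.add_sum_erase _ _ hiI).symm
      have hSI' : ∑ k ∈ I', lam k = lam j + ∑ k ∈ I.erase i, lam k := by
        rw [hI'def, Finset.sum_insert hji]
      have hSle : ∑ k ∈ I', lam k ≤ ∑ k ∈ I, lam k := by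
        rw [hSI, hSI']
        have := hmono i j hij
        linarith
      -- products: t I * S I = t I' * S I' = F
      have hprod : t I * (∑ k ∈ I, lam k) = t I' * (∑ k ∈ I', lam k) := by
        rw [ht]
        simp only
        rw [Finset.prod_erase_mul _ _ hI, Finset.prod_erase_mul _ _ hI'mem]
      have h1 : 0 < t I' := htpos I'
      have h2 : 0 < ∑ k ∈ I, lam k := hSpos I hI
      have h3 : 0 < ∑ k ∈ I', lam k := hSpos I' hI'mem
      have : t I ≤ t I' := by nlinarith
      exact this.trans (hle I' hI'mem hjI')
  -- sum identity: ∑ i, Fkk i = p * ∑ I ∈ pc, t I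
  have hsum : ∑ i : Fin n, Fkk n p i lam = (p : ℝ) * ∑ I ∈ pc, t I := by
    have : ∀ i : Fin n, Fkk n p i lam = ∑ I ∈ pc, if i ∈ I then t I else 0 := by
      intro i
      rw [show Fkk n p i lam = ∑ I ∈ pc.filter (fun I => i ∈ I), t I from rfl,
        Finset.sum_filter]
    simp_rw [this]
    rw [Finset.sum_comm, Finset.mul_sum]
    refine Finset.sum_congr rfl fun I hI => ?_
    have hcard : I.card = p := (Finset.mem_powersetCard.1 hI).2
    rw [Finset.sum_ite_mem, Finset.univ_inter, Finset.sum_const, hcard]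
    simp [mul_comm]
  -- conclude
  have hbound : ∑ I ∈ pc, t I ≤ (pc.card : ℝ) * Fkk n p j lam := by
    calc ∑ I ∈ pc, t I ≤ ∑ _I ∈ pc, Fkk n p j lam := Finset.sum_le_sum key
      _ = (pc.card : ℝ) * Fkk n p j lam := by rw [Finset.sum_const, nsmul_eq_mul]
  rw [hsum, one_div, inv_mul_le_iff₀ hp0]
  calc (p : ℝ) * ∑ I ∈ pc, t I ≤ (p : ℝ) * ((pc.card : ℝ) * Fkk n p j lam) :=
        mul_le_mul_of_nonneg_left hbound (by positivity)
    _ = (p : ℝ) * (pc.card : ℝ) * Fkk n p j lam := by ring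
end

section
/- If λ ∈ 𝒫_p and k, r are indices with λ_k ≥ λ_r, then F^{kk}(λ) ≤ F^{rr}(λ). In particular, when the entries are ordered λ₁ ≥ λ₂ ≥ ⋯ ≥ λₙ one has F^{11}(λ) ≤ F^{22}(λ) ≤ ⋯ ≤ F^{nn}(λ). (This monotonicity is equivalent to the nonpositivity of the mixed second derivatives F^{kr,rk} = (F^{kk} − F^{rr})/(λ_k − λ_r) on 𝒫_p, which is used throughout the paper.) -/
open Finset

/-- Monotonicity of the derivatives of `F` on `𝒫_p`: if `λ_k ≥ λ_r` then
`F^{kk}(λ) ≤ F^{rr}(λ)`. -/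
theorem Fkk_antitone (n p : ℕ) (hn : 1 ≤ n) (hp1 : 1 ≤ p) (hpn : p ≤ n)
    (lam : Fin n → ℝ) (hP : Pcone n p lam)
    (k r : Fin n) (h : lam r ≤ lam k) :
    Fkk n p k lam ≤ Fkk n p r lam := by
  rcases eq_or_ne k r with rfl | hkr
  · exact le_refl _
  set P := Finset.powersetCard p (Finset.univ : Finset (Fin n)) with hPdef
  set S : Finset (Fin n) → ℝ := fun I => ∑ i ∈ I, lam i with hSdef
  set F : ℝ := ∏ J ∈ P, S J with hFdef
  have hFpos : 0 < F := Finset.prod_pos (fun J hJ => hP J hJ)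
  have hterm : ∀ I ∈ P, (∏ J ∈ P.erase I, S J) = F / S I := by
    intro I hI
    have hSpos := hP I hI
    rw [eq_div_iff (ne_of_gt hSpos), mul_comm]
    exact Finset.mul_prod_erase P S hI
  have hFkk : ∀ m : Fin n, Fkk n p m lam = ∑ I ∈ P.filter (fun I => m ∈ I), F / S I := by
    intro m
    unfold Fkk
    refine Finset.sum_congr rfl ?_
    intro I hI
    exact hterm I (Finset.mem_filter.mp hI).1
  rw [hFkk k, hFkk r]
  -- split each sum according to membership of the other index
  have hsplit : ∀ a b : Fin n,
      ∑ I ∈ P.filter (fun I => a ∈ I), F / S I =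
        (∑ I ∈ P.filter (fun I => a ∈ I ∧ b ∈ I), F / S I) +
        ∑ I ∈ P.filter (fun I => a ∈ I ∧ b ∉ I), F / S I := by
    intro a b
    rw [← Finset.sum_filter_add_sum_filter_not (P.filter (fun I => a ∈ I)) (fun I => b ∈ I),
      Finset.filter_filter, Finset.filter_filter]
  rw [hsplit k r, hsplit r k]
  have hcomm : P.filter (fun I => k ∈ I ∧ r ∈ I) = P.filter (fun I => r ∈ I ∧ k ∈ I) := by
    apply Finset.filter_congr; intro I _; simp [and_comm]
  rw [hcomm]
  refine add_le_add (le_refl _) ?_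
  -- the swap map
  have hmemP : ∀ I : Finset (Fin n), I ∈ P ↔ I.card = p := by
    intro I; simp [hPdef, Finset.mem_powersetCard_univ]
  have hswap : ∀ (a b : Fin n), a ≠ b → ∀ I ∈ P.filter (fun I => a ∈ I ∧ b ∉ I),
      insert b (I.erase a) ∈ P.filter (fun I => b ∈ I ∧ a ∉ I) := by
    intro a b hab I hI
    obtain ⟨hIP, haI, hbI⟩ := Finset.mem_filter.mp hI
    have hbe : b ∉ I.erase a := fun hc => hbI (Finset.mem_of_mem_erase hc)
    refine Finset.mem_filter.mpr ⟨?_, Finset.mem_insert_self _ _, ?_⟩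
    · rw [hmemP]
      rw [Finset.card_insert_of_notMem hbe, Finset.card_erase_of_mem haI,
        (hmemP I).mp hIP]
      omega
    · intro hc
      rcases Finset.mem_insert.mp hc with h1 | h2
      · exact hab h1
      · exact (Finset.notMem_erase a I) h2
  have hswapS : ∀ I, k ∈ I → r ∉ I →
      S (insert r (I.erase k)) = S I - lam k + lam r := by
    intro I hk hr
    have hbe : r ∉ I.erase k := fun hc => hr (Finset.mem_of_mem_erase hc)
    rw [hSdef]
    simp only
    rw [Finset.sum_insert hbe, Finset.sum_erase_eq_sub hk]
    ring
  -- reindex the RHS sum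
  have key : ∑ I ∈ P.filter (fun I => k ∈ I ∧ r ∉ I), F / S (insert r (I.erase k)) =
      ∑ I ∈ P.filter (fun I => r ∈ I ∧ k ∉ I), F / S I := by
    refine Finset.sum_nbij' (fun I => insert r (I.erase k)) (fun J => insert k (J.erase r))
      (hswap k r hkr) (hswap r k hkr.symm) ?_ ?_ (fun I _ => rfl)
    · intro I hI
      obtain ⟨hIP, hkI, hrI⟩ := Finset.mem_filter.mp hI
      have hbe : r ∉ I.erase k := fun hc => hrI (Finset.mem_of_mem_erase hc)
      rw [Finset.erase_insert hbe, Finset.insert_erase hkI]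
    · intro J hJ
      obtain ⟨hJP, hrJ, hkJ⟩ := Finset.mem_filter.mp hJ
      have hbe : k ∉ J.erase r := fun hc => hkJ (Finset.mem_of_mem_erase hc)
      rw [Finset.erase_insert hbe, Finset.insert_erase hrJ]
  rw [← key]
  apply Finset.sum_le_sum
  intro I hI
  obtain ⟨hIP, hkI, hrI⟩ := Finset.mem_filter.mp hI
  have hI' := hswap k r hkr I hI
  have hI'P := (Finset.mem_filter.mp hI').1
  have hpos := hP I hIP
  have hpos' := hP _ hI'P
  have hle : S (insert r (I.erase k)) ≤ S I := by
    rw [hswapS I hkI hrI]; linarith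
  exact div_le_div_of_nonneg_left hFpos.le hpos' hle
end

section
/- (Lemma 2.4) Suppose 2 ≤ p ≤ n−1 and 2p ≥ n. For every f₀ > 0 there exists a constant C > 0, depending only on n, p and f₀, with the following property: if λ ∈ 𝒫_p satisfies λ₁ ≥ λ₂ ≥ ⋯ ≥ λₙ, λₙ ≥ −λ₁/(2(p−1)), and F(λ) ≥ f₀, then λ₁ ≤ C · Σ_{i=1}^n F^{ii}(λ). -/
open Finset

/-- number of `(q+1)`-subsets of `s` containing a fixed `a ∈ s`. -/
lemma aux_card_filter_mem {α : Type*} [DecidableEq α] (s : Finset α) (a : α) (ha : a ∈ s)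
    (q : ℕ) :
    ((Finset.powersetCard (q+1) s).filter (fun J => a ∈ J)).card
      = (Finset.powersetCard q (s.erase a)).card := by
  refine Finset.card_bij' (fun J _ => J.erase a) (fun T _ => insert a T) ?hi ?hj ?li ?ri
  case hi =>
    intro J hJ
    simp only [Finset.mem_filter, Finset.mem_powersetCard] at hJ
    rw [Finset.mem_powersetCard]
    exact ⟨Finset.erase_subset_erase a hJ.1.1,
      by rw [Finset.card_erase_of_mem hJ.2]; omega⟩

  case hj =>
    intro T hT
    rw [Finset.mem_powersetCard] at hT
    have haT : a ∉ T := fun h => (Finset.mem_erase.1 (hT.1 h)).1 rfl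
    simp only [Finset.mem_filter, Finset.mem_powersetCard]
    refine ⟨⟨?_, ?_⟩, Finset.mem_insert_self a T⟩
    · intro x hx
      rcases Finset.mem_insert.1 hx with rfl | hx
      exacts [ha, (Finset.mem_erase.1 (hT.1 hx)).2]
    · rw [Finset.card_insert_of_notMem haT, hT.2]
  case li =>
    intro J hJ
    simp only [Finset.mem_filter] at hJ
    exact Finset.insert_erase hJ.2
  case ri =>
    intro T hT
    rw [Finset.mem_powersetCard] at hT
    exact Finset.erase_insert (fun h => (Finset.mem_erase.1 (hT.1 h)).1 rfl)

/-- the `(q+1)`-subsets of `s` avoiding `a` are the `(q+1)`-subsets of `s.erase a`. -/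
lemma aux_filter_not_mem {α : Type*} [DecidableEq α] (s : Finset α) (a : α) (q : ℕ) :
    (Finset.powersetCard q s).filter (fun J => a ∉ J)
      = Finset.powersetCard q (s.erase a) := by
  ext J
  simp only [Finset.mem_filter, Finset.mem_powersetCard, Finset.subset_erase]
  tauto


set_option maxHeartbeats 1000000 in
/-- Lemma 2.4: for `2 ≤ p ≤ n−1` with `2p ≥ n` and every `f₀ > 0` there is `C > 0`
such that every ordered `λ ∈ 𝒫_p` with `λₙ ≥ −λ₁/(2(p−1))` and `F(λ) ≥ f₀`
satisfies `λ₁ ≤ C · Σ_i F^{ii}(λ)`. -/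
theorem lemma24 (n p : ℕ) (hp2 : 2 ≤ p) (hpn : p ≤ n - 1) (h2p : n ≤ 2 * p) :
    ∀ f₀ : ℝ, 0 < f₀ → ∃ C : ℝ, 0 < C ∧
      ∀ lam : Fin n → ℝ, Pcone n p lam →
        (∀ i j : Fin n, i ≤ j → lam j ≤ lam i) →
        -(lam ⟨0, by omega⟩) / (2 * ((p : ℝ) - 1)) ≤ lam ⟨n - 1, by omega⟩ →
        f₀ ≤ Fval n p lam →
        lam ⟨0, by omega⟩ ≤ C * ∑ i : Fin n, Fkk n p i lam := by
  obtain ⟨m, rfl⟩ : ∃ m, n = m + 1 := ⟨n - 1, by omega⟩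
  obtain ⟨q, rfl⟩ : ∃ q, p = q + 1 := ⟨p - 1, by omega⟩
  intro f₀ hf₀
  have hq1 : 1 ≤ q := by omega
  have hqm : q + 1 ≤ m := by omega
  have h2q : m ≤ 2 * q + 1 := by omega
  set N := (m+1).choose (q+1) with hNdef
  set M := m.choose q with hMdef
  set Kc := m.choose (q+1) with hKcdef
  have hNMK : N = M + Kc := Nat.choose_succ_succ' m q
  have hM1 : 1 ≤ M := Nat.choose_pos (by omega)
  have hKc1 : 1 ≤ Kc := Nat.choose_pos (by omega)
  have hMKc : Kc ≤ M := by
    have h := Nat.choose_succ_right_eq m q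
    have h2 : m - q ≤ q + 1 := by omega
    have h3 : Kc * (q+1) ≤ M * (q+1) :=
      h.le.trans (Nat.mul_le_mul_left M h2)
    exact Nat.le_of_mul_le_mul_right h3 (by omega)
  have hN2 : 2 ≤ N := by omega
  have hpR : (2:ℝ) ≤ ((q:ℝ)+1) := by
    have : (1:ℝ) ≤ (q:ℝ) := by exact_mod_cast hq1
    linarith
  have hpRpos : (0:ℝ) < ((q:ℝ)+1) := by linarith
  -- the constants
  set c₁ : ℝ := (1/(2*((q:ℝ)+1)))^(N-2) / 2 with hc₁def
  set c₂ : ℝ := (1/(2*((q:ℝ)+1)))^(M-Kc) * (1/2)^(Kc-1) / 2 with hc₂def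
  have hc₁ : 0 < c₁ := by positivity
  have hc₂ : 0 < c₂ := by positivity
  set c : ℝ := min f₀ (min c₁ c₂) with hcdef
  have hc : 0 < c := lt_min hf₀ (lt_min hc₁ hc₂)
  refine ⟨c⁻¹, by positivity, ?_⟩
  intro lam hP hmono hlow hF
  set k0 : Fin (m+1) := ⟨0, by omega⟩ with hk0def
  set kl : Fin (m+1) := ⟨m, by omega⟩ with hkldef
  set S : Finset (Fin (m+1)) → ℝ := fun J => ∑ i ∈ J, lam i with hSdef
  set 𝒮 := Finset.powersetCard (q+1) (Finset.univ : Finset (Fin (m+1))) with h𝒮def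
  have h𝒮card : 𝒮.card = N := by
    rw [h𝒮def, Finset.card_powersetCard, Finset.card_univ, Fintype.card_fin]
  set l1 : ℝ := lam k0 with hl1def
  have hlow' : -l1 / (2 * (q:ℝ)) ≤ lam kl := by
    have h : -l1 / (2 * ((((q:ℕ)+1:ℕ) : ℝ) - 1)) ≤ lam kl := hlow
    push_cast at h
    have e : ((q:ℝ) + 1 - 1) = (q:ℝ) := by ring
    rwa [e] at h
  have hSpos : ∀ J ∈ 𝒮, 0 < S J := hP
  have hle1 : ∀ i, lam i ≤ l1 := fun i => hmono k0 i (by simp [hk0def, Fin.le_def])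
  have hgekl : ∀ i, lam kl ≤ lam i := fun i =>
    hmono i kl (by simp [hkldef, Fin.le_def]; omega)
  have hScard : ∀ J ∈ 𝒮, J.card = q + 1 := fun J hJ => (Finset.mem_powersetCard.1 hJ).2
  have hSle : ∀ J ∈ 𝒮, S J ≤ ((q:ℝ)+1) * l1 := by
    intro J hJ
    have h := Finset.sum_le_card_nsmul J lam l1 (fun i _ => hle1 i)
    rw [hScard J hJ] at h
    calc S J ≤ (q+1) • l1 := h
      _ = ((q:ℝ)+1) * l1 := by push_cast [nsmul_eq_mul]; ring
  -- 𝒮 is nonempty and l1 > 0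
  obtain ⟨J₀, hJ₀⟩ : 𝒮.Nonempty := by
    rw [h𝒮def]
    apply Finset.powersetCard_nonempty_of_le
    simp [Finset.card_univ]; omega
  have hl1 : 0 < l1 := by
    have h1 := hSpos J₀ hJ₀
    have h2 := hSle J₀ hJ₀
    nlinarith
  -- sets containing k0 have sum at least l1/2
  have hbig : ∀ J ∈ 𝒮, k0 ∈ J → l1 / 2 ≤ S J := by
    intro J hJ hk0J
    have hqR : (0:ℝ) < ((q:ℕ):ℝ) := by exact_mod_cast hq1
    have hkl2 : -l1 / 2 ≤ (q:ℝ) * lam kl := by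
      have h1 : ((q:ℝ)) * (-l1 / (2 * (q:ℝ))) ≤ (q:ℝ) * lam kl :=
        mul_le_mul_of_nonneg_left hlow' hqR.le
      have h2 : ((q:ℝ)) * (-l1 / (2 * (q:ℝ))) = -l1/2 := by
        field_simp
      linarith [h1, h2.symm.le]
    have hsum : (q:ℝ) * lam kl ≤ ∑ i ∈ J.erase k0, lam i := by
      have h := Finset.card_nsmul_le_sum (J.erase k0) lam (lam kl)
        (fun i _ => hgekl i)
      rw [Finset.card_erase_of_mem hk0J, hScard J hJ] at h
      simpa [nsmul_eq_mul] using h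
    have hsplit : S J = l1 + ∑ i ∈ J.erase k0, lam i := by
      rw [hSdef, hl1def]
      exact (Finset.add_sum_erase J lam hk0J).symm
    rw [hsplit]
    linarith
  -- minimizer
  obtain ⟨Ib, hIb𝒮, hIbmin⟩ := Finset.exists_min_image 𝒮 S ⟨J₀, hJ₀⟩
  set Sb := S Ib with hSbdef
  have hSbpos : 0 < Sb := hSpos Ib hIb𝒮
  obtain ⟨i₀, hi₀⟩ : Ib.Nonempty := by
    rw [← Finset.card_pos, hScard Ib hIb𝒮]; omega
  set P := ∏ J ∈ 𝒮.erase Ib, S J with hPdef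
  have hPpos : 0 < P :=
    Finset.prod_pos (fun J hJ => hSpos J (Finset.mem_of_mem_erase hJ))
  have hFP : Fval (m+1) (q+1) lam = Sb * P :=
    (Finset.mul_prod_erase 𝒮 S hIb𝒮).symm
  -- the sum of Fkk dominates P
  have hFkknonneg : ∀ i : Fin (m+1), 0 ≤ Fkk (m+1) (q+1) i lam := by
    intro i
    apply Finset.sum_nonneg
    intro I hI
    exact (Finset.prod_pos (fun J hJ => hSpos J (Finset.mem_of_mem_erase hJ))).le
  have hstep1 : P ≤ ∑ i : Fin (m+1), Fkk (m+1) (q+1) i lam := by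
    have h1 : P ≤ Fkk (m+1) (q+1) i₀ lam := by
      apply Finset.single_le_sum
        (f := fun I => ∏ J ∈ 𝒮.erase I, S J)
        (fun I hI => (Finset.prod_pos
          (fun J hJ => hSpos J (Finset.mem_of_mem_erase hJ))).le)
      exact Finset.mem_filter.2 ⟨hIb𝒮, hi₀⟩
    exact h1.trans (Finset.single_le_sum (fun i _ => hFkknonneg i) (Finset.mem_univ i₀))
  -- main estimate : c * l1 ≤ P
  have hmain : c * l1 ≤ P := by
    rcases le_or_gt (Sb * l1) 1 with hcase | hcase
    · -- small minimum : P = F/Sb ≥ f₀ l1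
      have hF' : f₀ ≤ Sb * P := hF.trans_eq hFP
      have h1 : f₀ * l1 ≤ P := by nlinarith
      have h2 : c * l1 ≤ f₀ * l1 :=
        mul_le_mul_of_nonneg_right (min_le_left _ _) hl1.le
      linarith
    · -- big minimum
      have hSbge : 1 / l1 ≤ Sb := by
        rw [div_le_iff₀ hl1]; linarith
      have hl1p : 1 / ((q:ℝ)+1) ≤ l1 := by
        have h1 : 1 ≤ ((q:ℝ)+1) * l1 := by
          have h2 := hSle Ib hIb𝒮
          nlinarith [mul_le_mul_of_nonneg_right h2 hl1.le, hl1, hpR, hcase]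
        rw [div_le_iff₀ hpRpos]
        linarith
      have h2pl : 1 / (2*((q:ℝ)+1)) ≤ l1 / 2 := by
        rw [div_le_div_iff₀ (by positivity) (by norm_num : (0:ℝ) < 2)]
        rw [div_le_iff₀ hpRpos] at hl1p
        nlinarith [hl1p]
      by_cases hk0Ib : k0 ∈ Ib
      · -- all sums are at least l1/2
        have hallbig : ∀ J ∈ 𝒮.erase Ib, l1/2 ≤ S J := by
          intro J hJ
          exact (hbig Ib hIb𝒮 hk0Ib).trans (hIbmin J (Finset.mem_of_mem_erase hJ))
        have hcard : (𝒮.erase Ib).card = N - 1 := by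
          rw [Finset.card_erase_of_mem hIb𝒮, h𝒮card]
        have h1 : (l1/2)^(N-1) ≤ P := by
          have := Finset.prod_le_prod (s := 𝒮.erase Ib)
            (f := fun _ => l1/2) (g := S)
            (fun J _ => by positivity) hallbig
          rwa [Finset.prod_const, hcard] at this
        have hsplit : N - 1 = (N-2) + 1 := by omega
        have h2 : c₁ * l1 ≤ (l1/2)^(N-1) := by
          rw [hsplit, pow_succ]
          have h3 : (1/(2*((q:ℝ)+1)))^(N-2) ≤ (l1/2)^(N-2) :=
            pow_le_pow_left₀ (by positivity) h2pl _
          rw [hc₁def]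
          calc (1/(2*((q:ℝ)+1)))^(N-2)/2 * l1
              = (1/(2*((q:ℝ)+1)))^(N-2) * (l1/2) := by ring
            _ ≤ (l1/2)^(N-2) * (l1/2) :=
            mul_le_mul_of_nonneg_right h3 (by positivity)
        have hcc : c ≤ c₁ := (min_le_right _ _).trans (min_le_left _ _)
        calc c * l1 ≤ c₁ * l1 := mul_le_mul_of_nonneg_right hcc hl1.le
          _ ≤ (l1/2)^(N-1) := h2
          _ ≤ P := h1
      · -- k0 ∉ Ib : count sets containing k0
        set A := 𝒮.filter (fun J => k0 ∈ J) with hAdef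
        set B := (𝒮.filter (fun J => k0 ∉ J)).erase Ib with hBdef
        have hAcard : A.card = M := by
          rw [hAdef, h𝒮def, aux_card_filter_mem _ _ (Finset.mem_univ k0) q,
            Finset.card_powersetCard, Finset.card_erase_of_mem (Finset.mem_univ k0),
            Finset.card_univ, Fintype.card_fin]
          rfl
        have hBcard : B.card = Kc - 1 := by
          rw [hBdef, Finset.card_erase_of_mem
            (Finset.mem_filter.2 ⟨hIb𝒮, hk0Ib⟩)]
          rw [h𝒮def, aux_filter_not_mem, Finset.card_powersetCard,
            Finset.card_erase_of_mem (Finset.mem_univ k0),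
            Finset.card_univ, Fintype.card_fin]
          rfl
        have hPAB : P = (∏ J ∈ A, S J) * (∏ J ∈ B, S J) := by
          rw [hPdef, ← Finset.prod_filter_mul_prod_filter_not (𝒮.erase Ib)
            (fun J => k0 ∈ J) S]
          congr 1
          · congr 1
            ext J
            simp only [hAdef, Finset.mem_filter, Finset.mem_erase]
            constructor
            · rintro ⟨⟨hne, hJ𝒮⟩, hk⟩; exact ⟨hJ𝒮, hk⟩
            · rintro ⟨hJ𝒮, hk⟩
              exact ⟨⟨fun h => hk0Ib (h ▸ hk), hJ𝒮⟩, hk⟩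
          · congr 1
            ext J
            simp only [hBdef, Finset.mem_filter, Finset.mem_erase]
            tauto
        have hprodA : (l1/2)^M ≤ ∏ J ∈ A, S J := by
          have := Finset.prod_le_prod (s := A) (f := fun _ => l1/2) (g := S)
            (fun J _ => by positivity)
            (fun J hJ => by
              have h := Finset.mem_filter.1 hJ
              exact hbig J h.1 h.2)
          rwa [Finset.prod_const, hAcard] at this
        have hprodB : (1/l1)^(Kc-1) ≤ ∏ J ∈ B, S J := by
          have := Finset.prod_le_prod (s := B) (f := fun _ => 1/l1) (g := S)
            (fun J _ => by positivity)
            (fun J hJ => by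
              have h : J ∈ 𝒮 := (Finset.mem_filter.1 (Finset.mem_of_mem_erase hJ)).1
              exact hSbge.trans (hIbmin J h))
          rwa [Finset.prod_const, hBcard] at this
        have hkey : (l1/2)^M * (1/l1)^(Kc-1)
            = (l1/2)^(M-Kc) * (1/2)^(Kc-1) * (l1/2) := by
          have hM' : M = (M-Kc) + (Kc-1) + 1 := by omega
          have hhalf : (l1/2) * (1/l1) = 1/2 := by
            field_simp
          calc (l1/2)^M * (1/l1)^(Kc-1)
              = (l1/2)^((M-Kc) + (Kc-1) + 1) * (1/l1)^(Kc-1) := by rw [← hM']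
            _ = (l1/2)^(M-Kc) * ((l1/2)^(Kc-1) * (1/l1)^(Kc-1)) * (l1/2) := by
                rw [pow_add, pow_add, pow_one]; ring
            _ = (l1/2)^(M-Kc) * ((l1/2) * (1/l1))^(Kc-1) * (l1/2) := by
                rw [mul_pow]
            _ = (l1/2)^(M-Kc) * (1/2)^(Kc-1) * (l1/2) := by rw [hhalf]
        have h2 : c₂ * l1 ≤ (l1/2)^M * (1/l1)^(Kc-1) := by
          rw [hkey, hc₂def]
          have h3 : (1/(2*((q:ℝ)+1)))^(M-Kc) ≤ (l1/2)^(M-Kc) :=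
            pow_le_pow_left₀ (by positivity) h2pl _
          calc (1/(2*((q:ℝ)+1)))^(M-Kc) * (1/2)^(Kc-1) / 2 * l1
              = ((1/(2*((q:ℝ)+1)))^(M-Kc)) * ((1/2)^(Kc-1) * (l1/2)) := by ring
            _ ≤ (l1/2)^(M-Kc) * ((1/2)^(Kc-1) * (l1/2)) :=
              mul_le_mul_of_nonneg_right h3 (by positivity)
            _ = (l1/2)^(M-Kc) * (1/2)^(Kc-1) * (l1/2) := by ring
        have h4 : (l1/2)^M * (1/l1)^(Kc-1) ≤ P := by
          rw [hPAB]
          apply mul_le_mul hprodA hprodB (by positivity)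
          exact (Finset.prod_pos (fun J hJ => hSpos J
            (Finset.mem_filter.1 hJ).1)).le
        have hcc : c ≤ c₂ := (min_le_right _ _).trans (min_le_right _ _)
        calc c * l1 ≤ c₂ * l1 := mul_le_mul_of_nonneg_right hcc hl1.le
          _ ≤ (l1/2)^M * (1/l1)^(Kc-1) := h2
          _ ≤ P := h4
  -- conclude
  show l1 ≤ c⁻¹ * ∑ i : Fin (m+1), Fkk (m+1) (q+1) i lam
  have h5 : c * l1 ≤ ∑ i : Fin (m+1), Fkk (m+1) (q+1) i lam := hmain.trans hstep1
  calc l1 = c⁻¹ * (c * l1) := by field_simp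
    _ ≤ c⁻¹ * ∑ i : Fin (m+1), Fkk (m+1) (q+1) i lam :=
      mul_le_mul_of_nonneg_left h5 (by positivity)
end

section
/- (Lemma 2.5) For every ε with 0 < ε < 1 there exists δ > 0, depending only on ε, with the following property: if λ ∈ 𝒫_p satisfies λ₁ ≥ λ₂ ≥ ⋯ ≥ λₙ and λₙ ≥ −δλ₁, then for every index i ∈ {2,…,n} with λ_i < λ₁ one has −2λ₁·(F^{11}(λ) − F^{ii}(λ))/(λ₁ − λ_i) + (1+ε)·F^{11}(λ) ≥ (1+ε)·F^{ii}(λ). (The quotient (F^{11} − F^{ii})/(λ₁ − λ_i) is the mixed second derivative F^{1i,i1}; the conclusion is the inequality −2F^{1i,i1} + (1+ε)F^{11}/λ₁ ≥ (1+ε)F^{ii}/λ₁ multiplied through by λ₁ > 0.) -/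
open Finset

/-- Lemma 2.5: for every `0 < ε < 1` there is `δ = δ(ε) > 0` such that for every
ordered `λ ∈ 𝒫_p` with `λₙ ≥ −δλ₁` and every index `i ≥ 2` with `λ_i < λ₁`,
`−2λ₁·(F^{11} − F^{ii})/(λ₁ − λ_i) + (1+ε)·F^{11} ≥ (1+ε)·F^{ii}`. -/
theorem lemma25 (n p : ℕ) (hn : 1 ≤ n) (hp1 : 1 ≤ p) (hpn : p ≤ n) :
    ∀ ε : ℝ, 0 < ε → ε < 1 → ∃ δ : ℝ, 0 < δ ∧
      ∀ lam : Fin n → ℝ, Pcone n p lam →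
        (∀ i j : Fin n, i ≤ j → lam j ≤ lam i) →
        -δ * lam ⟨0, hn⟩ ≤ lam ⟨n - 1, by omega⟩ →
        ∀ i : Fin n, 1 ≤ (i : ℕ) → lam i < lam ⟨0, hn⟩ →
          (1 + ε) * Fkk n p i lam ≤
            -2 * lam ⟨0, hn⟩ *
                ((Fkk n p ⟨0, hn⟩ lam - Fkk n p i lam) / (lam ⟨0, hn⟩ - lam i)) +
              (1 + ε) * Fkk n p ⟨0, hn⟩ lam := by
  intro ε hε0 hε1
  refine ⟨(1 - ε) / (1 + ε), div_pos (by linarith) (by linarith), ?_⟩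
  intro lam hP hmono hlow i hi1 hilt
  set k0 : Fin n := ⟨0, hn⟩ with hk0
  set lam1 : ℝ := lam k0 with hlam1
  -- λ₁ > 0
  have hC : ∀ I ∈ Finset.powersetCard p (Finset.univ : Finset (Fin n)),
      0 < ∑ j ∈ I, lam j := hP
  obtain ⟨I₀, hI₀⟩ : (Finset.powersetCard p (Finset.univ : Finset (Fin n))).Nonempty :=
    Finset.powersetCard_nonempty.2 (by simpa using hpn)
  have hcard₀ : I₀.card = p := (Finset.mem_powersetCard.1 hI₀).2
  have hlam1pos : 0 < lam1 := by
    have h1 : (0:ℝ) < ∑ j ∈ I₀, lam j := hC I₀ hI₀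
    have h2 : ∑ j ∈ I₀, lam j ≤ ∑ j ∈ I₀, lam1 := by
      refine Finset.sum_le_sum fun j _ => ?_
      exact hmono k0 j (by simp [hk0, Fin.le_def])
    rw [Finset.sum_const, hcard₀, nsmul_eq_mul] at h2
    have hppos : 0 < (p:ℝ) := by exact_mod_cast hp1
    nlinarith
  -- λ_i lower bound
  have hlami : -((1 - ε) / (1 + ε)) * lam1 ≤ lam i := by
    have : lam ⟨n - 1, by omega⟩ ≤ lam i := by
      apply hmono
      simp only [Fin.le_def]
      omega
    linarith [hlow]
  set d : ℝ := lam1 - lam i with hd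
  have hdpos : 0 < d := by simp only [hd]; linarith
  have hkey : (1 + ε) * d ≤ 2 * lam1 := by
    have h1 : (1 + ε) * ((1 - ε) / (1 + ε)) = 1 - ε := by field_simp
    nlinarith [hlami]
  -- notation
  set 𝒞 : Finset (Finset (Fin n)) := Finset.powersetCard p (Finset.univ : Finset (Fin n))
    with h𝒞
  set P : Finset (Fin n) → ℝ := fun I => ∏ J ∈ 𝒞.erase I, ∑ j ∈ J, lam j with hPdef
  set F : ℝ := ∏ J ∈ 𝒞, ∑ j ∈ J, lam j with hF
  have hFpos : 0 < F := Finset.prod_pos hC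
  have hPF : ∀ I ∈ 𝒞, P I * (∑ j ∈ I, lam j) = F :=
    fun I hI => Finset.prod_erase_mul 𝒞 _ hI
  have hik0 : i ≠ k0 := by
    intro h; rw [h] at hi1; simp [hk0] at hi1
  -- splitting
  have hsplit : ∀ k m : Fin n,
      Fkk n p k lam
        = (∑ I ∈ 𝒞.filter (fun I => k ∈ I ∧ m ∈ I), P I)
          + ∑ I ∈ 𝒞.filter (fun I => k ∈ I ∧ m ∉ I), P I := by
    intro k m
    rw [Fkk, ← Finset.sum_filter_add_sum_filter_not (𝒞.filter (fun I => k ∈ I))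
      (fun I => m ∈ I), Finset.filter_filter, Finset.filter_filter]
  have hcomm : 𝒞.filter (fun I => i ∈ I ∧ k0 ∈ I) = 𝒞.filter (fun I => k0 ∈ I ∧ i ∈ I) := by
    apply Finset.filter_congr; intro I _; exact and_comm
  set A : Finset (Finset (Fin n)) := 𝒞.filter (fun I => i ∈ I ∧ k0 ∉ I) with hA
  set B : Finset (Finset (Fin n)) := 𝒞.filter (fun I => k0 ∈ I ∧ i ∉ I) with hB
  set C : ℝ := ∑ I ∈ 𝒞.filter (fun I => k0 ∈ I ∧ i ∈ I), P I with hCdef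
  have hFi : Fkk n p i lam = C + ∑ I ∈ A, P I := by
    rw [hsplit i k0, hcomm, hCdef]
  have hF1 : Fkk n p k0 lam = C + ∑ I ∈ B, P I := by
    rw [hsplit k0 i, hCdef]
  -- the bijection
  set φ : Finset (Fin n) → Finset (Fin n) := fun I => insert k0 (I.erase i) with hφ
  set ψ : Finset (Fin n) → Finset (Fin n) := fun J => insert i (J.erase k0) with hψ
  have hmemA : ∀ I ∈ A, i ∈ I ∧ k0 ∉ I ∧ I.card = p := by
    intro I hI
    simp only [hA, Finset.mem_filter, h𝒞, Finset.mem_powersetCard] at hI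
    exact ⟨hI.2.1, hI.2.2, hI.1.2⟩
  have hmemB : ∀ J ∈ B, k0 ∈ J ∧ i ∉ J ∧ J.card = p := by
    intro J hJ
    simp only [hB, Finset.mem_filter, h𝒞, Finset.mem_powersetCard] at hJ
    exact ⟨hJ.2.1, hJ.2.2, hJ.1.2⟩
  have hφmem : ∀ I ∈ A, φ I ∈ B := by
    intro I hI
    obtain ⟨hiI, hk0I, hcard⟩ := hmemA I hI
    have hk0e : k0 ∉ I.erase i := fun h => hk0I (Finset.mem_of_mem_erase h)
    have hie : i ∉ φ I := by
      simp only [hφ, Finset.mem_insert, Finset.mem_erase]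
      push_neg
      exact ⟨hik0, fun h => absurd rfl h⟩
    have hcardφ : (φ I).card = p := by
      rw [hφ, Finset.card_insert_of_notMem hk0e, Finset.card_erase_of_mem hiI, hcard]
      omega
    simp only [hB, Finset.mem_filter, h𝒞, Finset.mem_powersetCard]
    exact ⟨⟨Finset.subset_univ _, hcardφ⟩, Finset.mem_insert_self _ _, hie⟩
  have hψmem : ∀ J ∈ B, ψ J ∈ A := by
    intro J hJ
    obtain ⟨hk0J, hiJ, hcard⟩ := hmemB J hJ
    have hie : i ∉ J.erase k0 := fun h => hiJ (Finset.mem_of_mem_erase h)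
    have hk0e : k0 ∉ ψ J := by
      simp only [hψ, Finset.mem_insert, Finset.mem_erase]
      push_neg
      exact ⟨fun h => hik0 h.symm, fun h => absurd rfl h⟩
    have hcardψ : (ψ J).card = p := by
      rw [hψ, Finset.card_insert_of_notMem hie, Finset.card_erase_of_mem hk0J, hcard]
      omega
    simp only [hA, Finset.mem_filter, h𝒞, Finset.mem_powersetCard]
    exact ⟨⟨Finset.subset_univ _, hcardψ⟩, Finset.mem_insert_self _ _, hk0e⟩
  have hψφ : ∀ I ∈ A, ψ (φ I) = I := by
    intro I hI
    obtain ⟨hiI, hk0I, _⟩ := hmemA I hI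
    have hk0e : k0 ∉ I.erase i := fun h => hk0I (Finset.mem_of_mem_erase h)
    simp only [hφ, hψ]
    rw [Finset.erase_insert hk0e, Finset.insert_erase hiI]
  have hφψ : ∀ J ∈ B, φ (ψ J) = J := by
    intro J hJ
    obtain ⟨hk0J, hiJ, _⟩ := hmemB J hJ
    have hie : i ∉ J.erase k0 := fun h => hiJ (Finset.mem_of_mem_erase h)
    simp only [hφ, hψ]
    rw [Finset.erase_insert hie, Finset.insert_erase hk0J]
  have hBA : ∑ J ∈ B, P J = ∑ I ∈ A, P (φ I) :=
    Finset.sum_nbij' ψ φ hψmem hφmem hφψ hψφ (fun J hJ => by rw [hφψ J hJ])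
  -- shifted sums
  have hSφ : ∀ I ∈ A, (∑ j ∈ φ I, lam j) = (∑ j ∈ I, lam j) + d := by
    intro I hI
    obtain ⟨hiI, hk0I, _⟩ := hmemA I hI
    have hk0e : k0 ∉ I.erase i := fun h => hk0I (Finset.mem_of_mem_erase h)
    rw [hφ]
    rw [Finset.sum_insert hk0e, Finset.sum_erase_eq_sub hiI]
    simp only [hd, hlam1]
    ring
  -- termwise inequality summed
  have hterm : ∀ I ∈ A,
      (1 + ε) * P I * d + 2 * lam1 * (P (φ I) - P I) ≤ (1 + ε) * P (φ I) * d := by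
    intro I hI
    have hI𝒞 : I ∈ 𝒞 := (Finset.mem_filter.1 hI).1
    have hφ𝒞 : φ I ∈ 𝒞 := (Finset.mem_filter.1 (hφmem I hI)).1
    set a : ℝ := ∑ j ∈ I, lam j with ha
    have hapos : 0 < a := hC I hI𝒞
    have hadpos : 0 < a + d := by rw [← hSφ I hI]; exact hC _ hφ𝒞
    have hx : P I * a = F := hPF I hI𝒞
    have hy : P (φ I) * (a + d) = F := by rw [← hSφ I hI]; exact hPF _ hφ𝒞
    have hident : ((1 + ε) * P (φ I) * d - ((1 + ε) * P I * d + 2 * lam1 * (P (φ I) - P I)))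
        * (a * (a + d)) = F * d * (2 * lam1 - (1 + ε) * d) := by
      linear_combination ((1 + ε) * d - 2 * lam1) * a * hy
        - ((1 + ε) * d - 2 * lam1) * (a + d) * hx
    have hnum : 0 ≤ F * d * (2 * lam1 - (1 + ε) * d) := by
      apply mul_nonneg (by positivity)
      linarith
    nlinarith [mul_pos hapos hadpos]
  have hsum : (1 + ε) * (∑ I ∈ A, P I) * d + 2 * lam1 * ((∑ I ∈ A, P (φ I)) - ∑ I ∈ A, P I)
      ≤ (1 + ε) * (∑ I ∈ A, P (φ I)) * d := by
    calc (1 + ε) * (∑ I ∈ A, P I) * d + 2 * lam1 * ((∑ I ∈ A, P (φ I)) - ∑ I ∈ A, P I)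
        = ∑ I ∈ A, ((1 + ε) * P I * d + 2 * lam1 * (P (φ I) - P I)) := by
          rw [Finset.sum_add_distrib, ← Finset.sum_sub_distrib, Finset.mul_sum,
            Finset.mul_sum, Finset.sum_mul]
      _ ≤ ∑ I ∈ A, (1 + ε) * P (φ I) * d := Finset.sum_le_sum hterm
      _ = (1 + ε) * (∑ I ∈ A, P (φ I)) * d := by
          rw [Finset.mul_sum, Finset.sum_mul]
  -- conclude
  set SA : ℝ := ∑ I ∈ A, P I with hSA
  set SB : ℝ := ∑ I ∈ A, P (φ I) with hSB
  rw [hFi, hF1, hBA]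
  have hdiff : (C + SB) - (C + SA) = SB - SA := by ring
  rw [hdiff]
  have hq0 : (1 + ε) * (SA - SB) * d ≤ -2 * lam1 * (SB - SA) := by nlinarith [hsum]
  have hq : (1 + ε) * (SA - SB) ≤ -2 * lam1 * (SB - SA) / d := (le_div_iff₀ hdpos).2 hq0
  rw [mul_div_assoc] at hq
  have hsplit2 : (1 + ε) * (C + SA) = (1 + ε) * (SA - SB) + (1 + ε) * (C + SB) := by ring
  linarith [hq]
end
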